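/- Let A be an N×N integer matrix. The map η_A : Z^{N+1} → Z^N defined by η_A(x_1,...,x_{N-1},x_N,x_{N+1}) = (x_1,...,x_{N-1}, x_N + x_{N+1}) induces a group isomorphism from G(A°) = Z^{N+1}/(1-(A°)^t)Z^{N+1} onto G(A) = Z^N/(1-A^t)Z^N, sending the class of (1,...,1,0) (first N entries 1, last entry 0) to the class of the all-ones vector (1,...,1) in Z^N. -/

import Mathlib

/-- Parry–Sullivan expansion at vertex `N = n+1` of an `N × N` matrix `A`:
first `N-1` rows are those of `A` with a `0` appended in column `N+1`,
row `N` is the standard basis vector `e_{N+1}`, and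
row `N+1` is row `N` of `A` with a `0` appended. -/
def psExpansion {n : ℕ} (A : Matrix (Fin (n+1)) (Fin (n+1)) ℤ) :
    Matrix (Fin (n+2)) (Fin (n+2)) ℤ :=
  Matrix.of fun i j =>
    if hi : (i : ℕ) < n then
      if hj : (j : ℕ) < n + 1 then A ⟨i, Nat.lt_succ_of_lt hi⟩ ⟨j, hj⟩ else 0
    else if (i : ℕ) = n then
      if (j : ℕ) = n + 1 then 1 else 0
    else
      if hj : (j : ℕ) < n + 1 then A ⟨n, Nat.lt_succ_self n⟩ ⟨j, hj⟩ else 0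

/-- The subgroup `(1 - Bᵗ)ℤ^k` of `ℤ^k`, i.e. the image of `x ↦ (1 - Bᵗ)x`. -/
def bfSubgroup {k : ℕ} (B : Matrix (Fin k) (Fin k) ℤ) : Submodule ℤ (Fin k → ℤ) :=
  LinearMap.range (Matrix.mulVecLin (1 - B.transpose))

/-- The map `η_A(x_1,…,x_{N+1}) = (x_1,…,x_{N-1}, x_N + x_{N+1})`. -/
def etaMap {n : ℕ} (x : Fin (n+2) → ℤ) : Fin (n+1) → ℤ :=
  fun i => if (i : ℕ) = n then x ⟨n, by omega⟩ + x ⟨n+1, by omega⟩ else x ⟨i, by omega⟩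

def sigmaMap {n : ℕ} (x : Fin (n+2) → ℤ) : Fin (n+1) → ℤ :=
  fun i => if (i : ℕ) = n then x ⟨n+1, by omega⟩ else x ⟨i, by omega⟩

def etaLin (n : ℕ) : (Fin (n+2) → ℤ) →ₗ[ℤ] (Fin (n+1) → ℤ) where
  toFun := etaMap
  map_add' x y := by
    funext i
    simp only [etaMap, Pi.add_apply]
    split <;> ring
  map_smul' c x := by
    funext i
    simp only [etaMap, Pi.smul_apply, smul_eq_mul, RingHom.id_apply]
    split <;> ring

lemma ps_mulVec {n : ℕ} (A : Matrix (Fin (n+1)) (Fin (n+1)) ℤ) (x : Fin (n+2) → ℤ)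
    (j : Fin (n+2)) :
    (psExpansion A).transpose.mulVec x j =
      if h : (j : ℕ) < n + 1 then A.transpose.mulVec (sigmaMap x) ⟨j, h⟩
      else x ⟨n, by omega⟩ := by
  simp only [Matrix.mulVec, dotProduct, Matrix.transpose_apply]
  by_cases h : (j : ℕ) < n + 1
  · rw [dif_pos h, Fin.sum_univ_castSucc, Fin.sum_univ_castSucc, Fin.sum_univ_castSucc]
    have h1 : ∀ k : Fin n, psExpansion A k.castSucc.castSucc j * x k.castSucc.castSucc
        = A k.castSucc ⟨j, h⟩ * sigmaMap x k.castSucc := by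
      intro k
      simp only [psExpansion, Matrix.of_apply, sigmaMap, Fin.coe_castSucc]
      split_ifs <;> first | (exfalso; omega) | rfl | ring1
    have h2 : psExpansion A (Fin.last n).castSucc j * x (Fin.last n).castSucc = 0 := by
      simp only [psExpansion, Matrix.of_apply, Fin.coe_castSucc, Fin.val_last]
      split_ifs <;> first | (exfalso; omega) | ring1
    have h3 : psExpansion A (Fin.last (n+1)) j * x (Fin.last (n+1))
        = A (Fin.last n) ⟨j, h⟩ * sigmaMap x (Fin.last n) := by
      simp only [psExpansion, Matrix.of_apply, sigmaMap, Fin.val_last]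
      split_ifs <;> first | (exfalso; omega) | rfl | ring1
    rw [Finset.sum_congr rfl (fun k _ => h1 k), h2, h3]
    ring
  · rw [dif_neg h]
    have hj : (j : ℕ) = n + 1 := by omega
    rw [Finset.sum_eq_single (⟨n, by omega⟩ : Fin (n+2))]
    · simp only [psExpansion, Matrix.of_apply]
      split_ifs <;> first | (exfalso; omega) | ring1
    · intro b _ hb
      have hbv : (b : ℕ) ≠ n := fun hbn => hb (Fin.ext hbn)
      simp only [psExpansion, Matrix.of_apply]
      split_ifs <;> first | (exfalso; omega) | ring1
    · intro hmem
      exact absurd (Finset.mem_univ _) hmem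

lemma eta_comp {n : ℕ} (A : Matrix (Fin (n+1)) (Fin (n+1)) ℤ) (x : Fin (n+2) → ℤ) :
    etaMap (Matrix.mulVecLin (1 - (psExpansion A).transpose) x)
      = Matrix.mulVecLin (1 - A.transpose) (sigmaMap x) := by
  funext i
  have hmv : ∀ j : Fin (n+2), Matrix.mulVecLin (1 - (psExpansion A).transpose) x j
      = x j - (psExpansion A).transpose.mulVec x j := by
    intro j
    simp [Matrix.sub_mulVec, Matrix.mulVec_transpose]
  have hR : Matrix.mulVecLin (1 - A.transpose) (sigmaMap x) i
      = sigmaMap x i - A.transpose.mulVec (sigmaMap x) i := by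
    simp [Matrix.sub_mulVec, Matrix.mulVec_transpose]
  rw [hR]
  rcases i with ⟨iv, hlt⟩
  simp only [etaMap, sigmaMap, hmv, ps_mulVec]
  by_cases hi : iv = n
  · subst hi
    rw [if_pos rfl, if_pos rfl, dif_pos (by omega), dif_neg (by omega)]
    ring
  · rw [if_neg hi, if_neg hi, dif_pos (by omega)]

lemma eta_preimage {n : ℕ} (A : Matrix (Fin (n+1)) (Fin (n+1)) ℤ) (x : Fin (n+2) → ℤ)
    (z : Fin (n+1) → ℤ)
    (hz : Matrix.mulVecLin (1 - A.transpose) z = etaMap x) :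
    ∃ w, Matrix.mulVecLin (1 - (psExpansion A).transpose) w = x := by
  set w : Fin (n+2) → ℤ := fun k =>
    if h : (k : ℕ) < n then z ⟨k, by omega⟩
    else if (k : ℕ) = n then x ⟨n, by omega⟩ + A.transpose.mulVec z ⟨n, by omega⟩
    else z ⟨n, by omega⟩ with hw
  have hwv : ∀ k : Fin (n+2), w k =
      if h : (k : ℕ) < n then z ⟨k, by omega⟩
      else if (k : ℕ) = n then x ⟨n, by omega⟩ + A.transpose.mulVec z ⟨n, by omega⟩
      else z ⟨n, by omega⟩ := fun k => rfl
  have hsig : sigmaMap w = z := by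
    funext i
    rcases i with ⟨iv, hlt⟩
    simp only [sigmaMap, hwv]
    by_cases hi : iv = n
    · subst hi
      rw [if_pos rfl, dif_neg (by omega), if_neg (by omega)]
    · rw [if_neg hi, dif_pos (by omega : iv < n)]
  have hz' : ∀ j : Fin (n+1), z j - A.transpose.mulVec z j = etaMap x j := by
    intro j
    have := congrFun hz j
    simpa [Matrix.sub_mulVec, Matrix.mulVec_transpose] using this
  refine ⟨w, ?_⟩
  funext j
  have hmv : Matrix.mulVecLin (1 - (psExpansion A).transpose) w j
      = w j - (psExpansion A).transpose.mulVec w j := by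
    simp [Matrix.sub_mulVec, Matrix.mulVec_transpose]
  rcases j with ⟨jv, hjlt⟩
  rw [hmv, ps_mulVec, hsig]
  dsimp only
  by_cases h1 : jv < n
  · have hthis : z ⟨jv, by omega⟩ - A.transpose.mulVec z ⟨jv, by omega⟩
        = x ⟨jv, by omega⟩ := by
      have h2 := hz' ⟨jv, by omega⟩
      simpa [etaMap, show ¬(jv = n) from by omega] using h2
    rw [dif_pos (by omega : jv < n + 1), hwv]
    dsimp only
    rw [dif_pos h1]
    exact hthis
  · by_cases h2 : jv = n
    · subst h2
      rw [dif_pos (by omega), hwv]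
      dsimp only
      rw [dif_neg (by omega), if_pos rfl]
      ring1
    · have hj3 : jv = n + 1 := by omega
      subst hj3
      have hzn : z ⟨n, by omega⟩ - A.transpose.mulVec z ⟨n, by omega⟩
          = x ⟨n, by omega⟩ + x ⟨n+1, by omega⟩ := by
        have h3 := hz' ⟨n, by omega⟩
        simpa [etaMap] using h3
      rw [dif_neg (by omega : ¬(n + 1 < n + 1)), hwv, hwv]
      dsimp only
      rw [dif_neg (by omega : ¬(n + 1 < n)), if_neg (by omega : ¬(n + 1 = n)),
        dif_neg (by omega : ¬(n < n)), if_pos rfl]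
      linarith [hzn]

/-- `η_A` induces a group isomorphism `G(A°) ≅ G(A)` sending the class of
`(1,…,1,0)` (first `N` entries `1`, last entry `0`) to the class of the all-ones
vector `(1,…,1)`. -/
theorem etaMap_induces_isomorphism {n : ℕ} (A : Matrix (Fin (n+1)) (Fin (n+1)) ℤ) :
    ∃ e : ((Fin (n+2) → ℤ) ⧸ bfSubgroup (psExpansion A)) ≃+
        ((Fin (n+1) → ℤ) ⧸ bfSubgroup A),
      (∀ x : Fin (n+2) → ℤ,
        e (Submodule.Quotient.mk x) = Submodule.Quotient.mk (etaMap x)) ∧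
      e (Submodule.Quotient.mk (fun i : Fin (n+2) => if (i : ℕ) = n + 1 then 0 else 1))
        = Submodule.Quotient.mk (fun _ : Fin (n+1) => (1 : ℤ)) := by

  classical
  have hle : bfSubgroup (psExpansion A) ≤ Submodule.comap (etaLin n) (bfSubgroup A) := by
    rintro x ⟨w, rfl⟩
    exact ⟨sigmaMap w, (eta_comp A w).symm⟩
  let f := Submodule.mapQ (bfSubgroup (psExpansion A)) (bfSubgroup A) (etaLin n) hle
  have hf : ∀ x : Fin (n+2) → ℤ,
      f (Submodule.Quotient.mk x) = Submodule.Quotient.mk (etaMap x) := by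
    intro x
    exact Submodule.mapQ_apply (p := bfSubgroup (psExpansion A)) (q := bfSubgroup A) (etaLin n) x
  have hinj : Function.Injective f := by
    rw [← LinearMap.ker_eq_bot, LinearMap.ker_eq_bot']
    intro q hq
    obtain ⟨x, rfl⟩ := Submodule.Quotient.mk_surjective _ q
    rw [hf, Submodule.Quotient.mk_eq_zero] at hq
    rw [Submodule.Quotient.mk_eq_zero]
    obtain ⟨z, hz⟩ := hq
    obtain ⟨w, hw⟩ := eta_preimage A x z hz
    exact ⟨w, hw⟩
  have hsurj : Function.Surjective f := by
    intro q
    obtain ⟨v, rfl⟩ := Submodule.Quotient.mk_surjective _ q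
    refine ⟨Submodule.Quotient.mk
      (fun k : Fin (n+2) => if h : (k : ℕ) < n + 1 then v ⟨k, h⟩ else 0), ?_⟩
    rw [hf]
    congr 1
    funext i
    rcases i with ⟨iv, hlt⟩
    simp only [etaMap]
    by_cases hi : iv = n
    · subst hi
      rw [if_pos rfl, dif_pos (by omega), dif_neg (by omega), add_zero]
    · rw [if_neg hi, dif_pos (by omega)]
  refine ⟨(LinearEquiv.ofBijective f ⟨hinj, hsurj⟩).toAddEquiv, ?_, ?_⟩
  · intro x
    exact hf x
  · have h1 : f (Submodule.Quotient.mk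
        (fun i : Fin (n+2) => if (i : ℕ) = n + 1 then 0 else 1))
        = Submodule.Quotient.mk (fun _ : Fin (n+1) => (1 : ℤ)) := by
      rw [hf]
      congr 1
      funext i
      rcases i with ⟨iv, hlt⟩
      simp only [etaMap]
      first | (split_ifs <;> omega) | omega
    exact h1
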